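/- There is an absolute constant C such that for every real ν ≥ 0 and every r > 0, |(sin(νπ)/π) · ∫_0^∞ e^{-(r·sinh(s) + ν s)} ds| ≤ C · (r + ν)^{-1}. -/

import Mathlib

open MeasureTheory Real

/-- Bound on the error term in Schläfli's integral representation (estimate (2.10)):
`|sin(νπ)/π ∫_0^∞ e^{-(r sinh s + ν s)} ds| ≤ C (r+ν)⁻¹`. -/
theorem schlafli_error_bound :
    ∃ C : ℝ, 0 < C ∧ ∀ ν r : ℝ, 0 ≤ ν → 0 < r →
      |Real.sin (ν * π) / π *
          ∫ s in Set.Ioi (0 : ℝ), Real.exp (-(r * Real.sinh s + ν * s))|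
        ≤ C * (r + ν)⁻¹ := by
  refine ⟨1, one_pos, fun ν r hν hr => ?_⟩
  have hb : 0 < r + ν := by linarith
  have hmaj : ∀ s ∈ Set.Ioi (0 : ℝ),
      Real.exp (-(r * Real.sinh s + ν * s)) ≤ Real.exp (-((r + ν) * s)) := by
    intro s hs
    apply Real.exp_le_exp.2
    have hsinh : s < Real.sinh s := Real.self_lt_sinh_iff.2 hs
    nlinarith [hr.le]
  have hintg : IntegrableOn (fun s => Real.exp (-((r + ν) * s))) (Set.Ioi (0 : ℝ)) := by
    have := exp_neg_integrableOn_Ioi 0 hb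
    refine this.congr_fun (fun s _ => by ring_nf) measurableSet_Ioi
  have hint : IntegrableOn (fun s => Real.exp (-(r * Real.sinh s + ν * s))) (Set.Ioi (0 : ℝ)) := by
    apply hintg.integrable.mono'
    · exact (Continuous.neg (by continuity)).rexp.aestronglyMeasurable
    · filter_upwards [ae_restrict_mem measurableSet_Ioi] with s hs
      rw [Real.norm_eq_abs, abs_of_nonneg (Real.exp_nonneg _)]
      exact hmaj s hs
  have hIval : (∫ s in Set.Ioi (0 : ℝ), Real.exp (-((r + ν) * s))) = (r + ν)⁻¹ := by
    have := integral_comp_mul_left_Ioi (fun x => Real.exp (-x)) 0 hb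
    simp only [mul_zero, smul_eq_mul] at this
    rw [this, integral_exp_neg_Ioi_zero, mul_one]
  have hIle : (∫ s in Set.Ioi (0 : ℝ), Real.exp (-(r * Real.sinh s + ν * s))) ≤ (r + ν)⁻¹ := by
    rw [← hIval]
    exact setIntegral_mono_on hint hintg measurableSet_Ioi hmaj
  have hInn : 0 ≤ ∫ s in Set.Ioi (0 : ℝ), Real.exp (-(r * Real.sinh s + ν * s)) :=
    setIntegral_nonneg measurableSet_Ioi fun s _ => Real.exp_nonneg _
  rw [abs_mul, abs_of_nonneg hInn, one_mul]
  have h1 : |Real.sin (ν * π) / π| ≤ 1 := by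
    rw [abs_div, abs_of_pos Real.pi_pos]
    rw [div_le_one Real.pi_pos]
    calc |Real.sin (ν * π)| ≤ 1 := Real.abs_sin_le_one _
      _ ≤ π := by linarith [Real.pi_gt_three]
  calc |Real.sin (ν * π) / π| * (∫ s in Set.Ioi (0 : ℝ), Real.exp (-(r * Real.sinh s + ν * s)))
      ≤ 1 * (r + ν)⁻¹ := mul_le_mul h1 hIle hInn zero_le_one
    _ = (r + ν)⁻¹ := one_mul _
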